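/- Let (u,g) ∈ ℝ² and for μ > 0 set τ_μ := g/√(u² + g² + 2μ) + 1 and γ_μ := u/√(u² + g² + 2μ) − 1. Then: (a) if (u,g) ≠ (0,0), then as μ → 0⁺ one has τ_μ → g/√(u²+g²) + 1 and γ_μ → u/√(u²+g²) − 1; (b) if (u,g) = (0,0), then τ_μ = 1 and γ_μ = −1 for every μ > 0. In both cases the limit of (τ_μ, γ_μ) as μ → 0⁺ exists and lies in the set { (ζ + 1, ρ − 1) : ζ, ρ ∈ ℝ, ζ² + ρ² ≤ 1 }. -/

import Mathlib

open Filter Topology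

private lemma sqrt_tendsto (u g : ℝ) :
    Tendsto (fun μ : ℝ => Real.sqrt (u ^ 2 + g ^ 2 + 2 * μ)) (𝓝[>] 0)
      (𝓝 (Real.sqrt (u ^ 2 + g ^ 2))) := by
  have h : Tendsto (fun μ : ℝ => Real.sqrt (u ^ 2 + g ^ 2 + 2 * μ)) (𝓝 0)
      (𝓝 (Real.sqrt (u ^ 2 + g ^ 2))) := by
    have hc : Continuous (fun μ : ℝ => Real.sqrt (u ^ 2 + g ^ 2 + 2 * μ)) := by
      continuity
    simpa using hc.tendsto 0
  exact h.mono_left nhdsWithin_le_nhds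

private lemma main_tendsto (u g : ℝ) (h : (u, g) ≠ (0, 0)) :
    Tendsto
      (fun μ : ℝ => (g / Real.sqrt (u ^ 2 + g ^ 2 + 2 * μ) + 1,
        u / Real.sqrt (u ^ 2 + g ^ 2 + 2 * μ) - 1))
      (𝓝[>] 0)
      (𝓝 (g / Real.sqrt (u ^ 2 + g ^ 2) + 1, u / Real.sqrt (u ^ 2 + g ^ 2) - 1)) := by
  have hpos : 0 < u ^ 2 + g ^ 2 := by
    rcases (Prod.mk.injEq .. ▸ h : ¬(u = 0 ∧ g = 0)) with _
    by_contra hle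
    push_neg at hle
    have hu : u = 0 := by nlinarith [sq_nonneg u, sq_nonneg g]
    have hg : g = 0 := by nlinarith [sq_nonneg u, sq_nonneg g]
    exact h (by simp [hu, hg])
  have hs : Real.sqrt (u ^ 2 + g ^ 2) ≠ 0 := by positivity
  have hsq := sqrt_tendsto u g
  refine Tendsto.prodMk_nhds ?_ ?_
  · exact (Tendsto.div tendsto_const_nhds hsq hs).add tendsto_const_nhds
  · exact (Tendsto.div tendsto_const_nhds hsq hs).sub tendsto_const_nhds

/-- Componentwise Jacobian consistency of the smoothed Fischer–Burmeister coefficients: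
(a) if `(u,g) ≠ (0,0)` then `(τ_μ, γ_μ)` tends to the unsmoothed coefficients as
`μ → 0⁺`; (b) if `(u,g) = (0,0)` then `τ_μ = 1` and `γ_μ = −1` for all `μ > 0`;
in both cases the limit exists and lies in the set
`{(ζ+1, ρ−1) : ζ² + ρ² ≤ 1}` of C-subdifferential coefficient pairs. -/
theorem smoothed_tau_gamma_jacobian_consistency (u g : ℝ) :
    ((u, g) ≠ (0, 0) →
      Tendsto
        (fun μ : ℝ => (g / Real.sqrt (u ^ 2 + g ^ 2 + 2 * μ) + 1,
          u / Real.sqrt (u ^ 2 + g ^ 2 + 2 * μ) - 1))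
        (𝓝[>] 0)
        (𝓝 (g / Real.sqrt (u ^ 2 + g ^ 2) + 1, u / Real.sqrt (u ^ 2 + g ^ 2) - 1))) ∧
    ((u, g) = (0, 0) → ∀ μ : ℝ, 0 < μ →
      g / Real.sqrt (u ^ 2 + g ^ 2 + 2 * μ) + 1 = 1 ∧
      u / Real.sqrt (u ^ 2 + g ^ 2 + 2 * μ) - 1 = -1) ∧
    (∃ L : ℝ × ℝ,
      Tendsto
        (fun μ : ℝ => (g / Real.sqrt (u ^ 2 + g ^ 2 + 2 * μ) + 1,
          u / Real.sqrt (u ^ 2 + g ^ 2 + 2 * μ) - 1))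
        (𝓝[>] 0) (𝓝 L) ∧
      ∃ ζ ρ : ℝ, ζ ^ 2 + ρ ^ 2 ≤ 1 ∧ L = (ζ + 1, ρ - 1)) := by
  refine ⟨main_tendsto u g, ?_, ?_⟩
  · rintro h μ hμ
    obtain ⟨hu, hg⟩ : u = 0 ∧ g = 0 := Prod.mk.injEq .. ▸ h
    simp [hu, hg]
  · by_cases h : (u, g) = (0, 0)
    · obtain ⟨hu, hg⟩ : u = 0 ∧ g = 0 := Prod.mk.injEq .. ▸ h
      refine ⟨(1, -1), ?_, 0, 0, by norm_num⟩
      subst hu hg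
      simp only [zero_div, zero_add, zero_sub]
      exact tendsto_const_nhds
    · refine ⟨_, main_tendsto u g h, g / Real.sqrt (u ^ 2 + g ^ 2),
        u / Real.sqrt (u ^ 2 + g ^ 2), ?_, rfl⟩
      have hpos : 0 < u ^ 2 + g ^ 2 := by
        by_contra hle
        push_neg at hle
        have hu : u = 0 := by nlinarith [sq_nonneg u, sq_nonneg g]
        have hg : g = 0 := by nlinarith [sq_nonneg u, sq_nonneg g]
        exact h (by simp [hu, hg])
      rw [div_pow, div_pow, Real.sq_sqrt hpos.le]
      rw [← add_div, div_le_one hpos]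
      linarith
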